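/- Let U ∈ {0,1}^{n×k} be a clustering matrix in which every column is nonzero, let M = (U^T U)^{-1} U^T and C = U M, let D_1, D_2 ∈ ℝ^{n×n} be diagonal matrices, and let W ∈ ℝ^{n×m}. Then U M D_1 U M D_2 U M W = Diag(C diag(D_1)) · Diag(C diag(D_2)) · C W, i.e., clustering each diagonal factor separately and recombining preserves the diagonal structure of the scaled, normalized layer. -/
import Mathlib


open Matrix

/-- If `U ∈ {0,1}^{n×k}` is a clustering matrix (every row has exactly
one entry equal to 1) with every column nonzero, `M = (Uᵀ U)⁻¹ Uᵀ` and `C = U M`, then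
for diagonal `D_1, D_2 ∈ ℝ^{n×n}` and any `W ∈ ℝ^{n×m}`,
`U M D_1 U M D_2 U M W = Diag(C diag D_1) ⬝ Diag(C diag D_2) ⬝ C W`. -/
theorem clustering_diag_chain
    (n k m : ℕ) (U : Matrix (Fin n) (Fin k) ℝ)
    (hbin : ∀ i j, U i j = 0 ∨ U i j = 1)
    (hrow : ∀ i, ∃! j, U i j = 1)
    (hcol : ∀ j, ∃ i, U i j = 1)
    (D1 D2 : Matrix (Fin n) (Fin n) ℝ) (hD1 : D1.IsDiag) (hD2 : D2.IsDiag)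
    (W : Matrix (Fin n) (Fin m) ℝ) :
    U * ((Uᵀ * U)⁻¹ * Uᵀ) * D1 * U * ((Uᵀ * U)⁻¹ * Uᵀ) * D2 * U * ((Uᵀ * U)⁻¹ * Uᵀ) * W
      = Matrix.diagonal ((U * ((Uᵀ * U)⁻¹ * Uᵀ)) *ᵥ Matrix.diag D1)
          * Matrix.diagonal ((U * ((Uᵀ * U)⁻¹ * Uᵀ)) *ᵥ Matrix.diag D2)
          * (U * ((Uᵀ * U)⁻¹ * Uᵀ)) * W := by
  classical
  obtain ⟨c, hc⟩ : ∃ c : Fin n → Fin k, ∀ i j, U i j = if j = c i then 1 else 0 := by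
    choose c h1 h2 using hrow
    refine ⟨c, fun i j => ?_⟩
    by_cases hj : j = c i
    · simpa [hj] using h1 i
    · rcases hbin i j with h | h
      · simp [hj, h]
      · exact absurd (h2 i j h) hj
  set s : Fin k → ℝ := fun a => ((Finset.univ.filter fun i => a = c i).card : ℝ) with hs_def
  have hs : ∀ a, s a ≠ 0 := by
    intro a
    obtain ⟨i, hi⟩ := hcol a
    have hca : a = c i := by
      by_contra h
      rw [hc i a, if_neg h] at hi
      norm_num at hi
    have hmem : i ∈ Finset.univ.filter fun i => a = c i := by simp [hca]
    simp only [hs_def, Nat.cast_ne_zero]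
    exact Finset.card_ne_zero_of_mem hmem
  have hUtU : Uᵀ * U = Matrix.diagonal s := by
    ext a b
    simp only [Matrix.mul_apply, Matrix.transpose_apply, hc, Matrix.diagonal_apply]
    by_cases hab : a = b
    · subst hab
      rw [if_pos rfl]
      simp only [hs_def]
      rw [← Finset.sum_boole]
      congr 1
      ext i
      by_cases h : a = c i <;> simp [h]
    · rw [if_neg hab]
      apply Finset.sum_eq_zero
      intro i _
      by_cases ha : a = c i
      · have hb : ¬ b = c i := fun hb => hab (ha.trans hb.symm)
        simp [hb]
      · simp [ha]
  have hinv : (Uᵀ * U)⁻¹ = Matrix.diagonal fun a => (s a)⁻¹ := by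
    rw [hUtU]
    apply Matrix.inv_eq_right_inv
    rw [Matrix.diagonal_mul_diagonal]
    rw [show (fun i => s i * (s i)⁻¹) = fun _ => (1:ℝ) from funext fun i => mul_inv_cancel₀ (hs i)]
    exact Matrix.diagonal_one
  set C : Matrix (Fin n) (Fin n) ℝ := U * ((Uᵀ * U)⁻¹ * Uᵀ) with hC_def
  have hC : ∀ i j, C i j = if c j = c i then (s (c i))⁻¹ else 0 := by
    intro i j
    rw [hC_def, hinv, ← Matrix.mul_assoc, Matrix.mul_apply]
    have hterm : ∀ a, (U * Matrix.diagonal fun a => (s a)⁻¹) i a * Uᵀ a j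
        = if a = c i then (if a = c j then (s a)⁻¹ else 0) else 0 := by
      intro a
      rw [Matrix.mul_diagonal, Matrix.transpose_apply, hc, hc]
      by_cases h1 : a = c i <;> by_cases h2 : a = c j <;> simp [h1, h2]
    simp only [hterm]
    rw [Finset.sum_ite_eq' Finset.univ (c i)]
    simp only [Finset.mem_univ, if_true]
    by_cases h : c i = c j
    · rw [if_pos h, if_pos h.symm]
    · rw [if_neg h, if_neg fun h' => h h'.symm]
  have hconst : ∀ i l, C i l ≠ 0 → ∀ j, C l j = C i j := by
    intro i l hne j
    have hcl : c l = c i := by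
      by_contra h
      exact hne (by rw [hC i l, if_neg h])
    rw [hC l j, hC i j, hcl]
  have key : ∀ (D : Matrix (Fin n) (Fin n) ℝ), D.IsDiag →
      C * D * C = Matrix.diagonal (C *ᵥ D.diag) * C := by
    intro D hD
    ext i j
    rw [Matrix.mul_apply, Matrix.diagonal_mul]
    have h1 : ∀ l, (C * D) i l = C i l * D l l := by
      intro l
      rw [Matrix.mul_apply]
      apply Finset.sum_eq_single l
      · intro a _ ha
        rw [hD ha, mul_zero]
      · intro h; exact absurd (Finset.mem_univ l) h
    calc (∑ l, (C * D) i l * C l j)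
        = ∑ l, C i l * D l l * C i j := by
          apply Finset.sum_congr rfl
          intro l _
          rw [h1 l]
          by_cases h0 : C i l = 0
          · simp [h0]
          · rw [hconst i l h0 j]
      _ = (C *ᵥ D.diag) i * C i j := by
          rw [← Finset.sum_mul, Matrix.mulVec]
          congr 1
  rw [Matrix.mul_assoc (C * D1) U, ← hC_def,
      Matrix.mul_assoc (C * D1 * C * D2) U, ← hC_def,
      key D1 hD1, Matrix.mul_assoc (Matrix.diagonal (C *ᵥ D1.diag)) C D2,
      Matrix.mul_assoc (Matrix.diagonal (C *ᵥ D1.diag)) (C * D2) C,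
      key D2 hD2]
  simp only [Matrix.mul_assoc]
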